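/- Let z = a + bi be a complex number with a ∈ ℚ, a > 0, b > 0, and suppose that for an integer m ≥ 2 the quantities (z^j - z̄^j)/(2bi) are nonnegative real numbers for j = 0,…,m with equality for j = m. Then the argument of z equals π/m. -/

import Mathlib

open Complex in
/-- Let `z = a + bi` with `a ∈ ℚ`, `a > 0`, `b > 0`, and suppose that for an integer
`m ≥ 2` the quantities `(z^j - z̄^j)/(2bi)` are nonnegative reals for `j = 0,…,m`,
with equality for `j = m`. Then the argument of `z` equals `π/m`. -/
theorem stmt_3 (a b : ℝ) (ha : ∃ q : ℚ, a = (q : ℝ)) (ha' : 0 < a) (hb : 0 < b)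
    (z : ℂ) (hz : z = Complex.mk a b) (m : ℕ) (hm : 2 ≤ m)
    (hnonneg : ∀ j : ℕ, j ≤ m → ∃ r : ℝ,
      (z ^ j - (starRingEnd ℂ z) ^ j) / (2 * b * Complex.I) = (r : ℂ) ∧ 0 ≤ r)
    (heq : (z ^ m - (starRingEnd ℂ z) ^ m) / (2 * b * Complex.I) = 0) :
    Complex.arg z = Real.pi / m := by
  have hre : z.re = a := by rw [hz]
  have him0 : z.im = b := by rw [hz]
  have hzne : z ≠ 0 := by
    intro h
    rw [h] at him0
    simp at him0
    exact hb.ne him0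
  set θ := Complex.arg z with hθdef
  have habs : 0 < ‖z‖ := norm_pos_iff.mpr hzne
  have hsin : Real.sin θ = b / ‖z‖ := by
    rw [hθdef, Complex.sin_arg, him0]
  have hcos : Real.cos θ = a / ‖z‖ := by
    rw [hθdef, Complex.cos_arg hzne, hre]
  have hsinpos : 0 < Real.sin θ := by rw [hsin]; exact div_pos hb habs
  have hcospos : 0 < Real.cos θ := by rw [hcos]; exact div_pos ha' habs
  have hpi := Real.pi_pos
  have hθpos : 0 < θ := by
    by_contra h
    push_neg at h
    have h1 : Real.sin θ ≤ 0 :=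
      Real.sin_nonpos_of_nonpos_of_neg_pi_le h (le_of_lt (Complex.neg_pi_lt_arg z))
    exact absurd h1 (not_le.mpr hsinpos)
  have hθlt : θ < Real.pi / 2 := by
    by_contra h
    push_neg at h
    have h1 : Real.cos θ ≤ 0 := by
      apply Real.cos_nonpos_of_pi_div_two_le_of_le h
      have := Complex.arg_le_pi z
      nlinarith
    exact absurd h1 (not_le.mpr hcospos)
  -- imaginary part of z^j
  have himpow : ∀ j : ℕ, (z ^ j).im = ‖z‖ ^ j * Real.sin (j * θ) := by
    intro j
    conv_lhs => rw [← Complex.norm_mul_exp_arg_mul_I z]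
    rw [mul_pow, ← Complex.exp_nat_mul, ← Complex.ofReal_pow]
    have h : (j : ℂ) * ((θ : ℂ) * Complex.I) = ((j * θ : ℝ) : ℂ) * Complex.I := by
      push_cast; ring
    rw [h, Complex.im_ofReal_mul, Complex.exp_ofReal_mul_I_im]
  -- from the hypotheses: sin (j θ) ≥ 0 for j ≤ m
  have hden : (2 * (b : ℂ) * Complex.I) ≠ 0 := by
    simp [Complex.I_ne_zero, hb.ne']
  have hsj : ∀ j : ℕ, j ≤ m → 0 ≤ Real.sin (j * θ) := by
    intro j hj
    obtain ⟨r, hr, hr0⟩ := hnonneg j hj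
    rw [div_eq_iff hden, ← map_pow] at hr
    rw [Complex.sub_conj] at hr
    have h3 : (z ^ j).im = r * b := by
      have := congrArg Complex.im hr
      simp at this
      linarith
    have h4 : 0 ≤ (z ^ j).im := by rw [h3]; positivity
    rw [himpow j] at h4
    by_contra hneg
    push_neg at hneg
    nlinarith [pow_pos habs j]
  -- sin (m θ) = 0
  have hsm : Real.sin (m * θ) = 0 := by
    rw [div_eq_zero_iff] at heq
    rcases heq with heq | heq
    · rw [← map_pow, Complex.sub_conj] at heq
      have h3 : (z ^ m).im = 0 := by
        have := congrArg Complex.im heq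
        simp at this
        simpa using this
      rw [himpow m] at h3
      rcases mul_eq_zero.mp h3 with h | h
      · exact absurd h (pow_pos habs m).ne'
      · exact h
    · exact absurd heq hden
  obtain ⟨k, hk⟩ := Real.sin_eq_zero_iff.mp hsm
  have hmpos : (0 : ℝ) < m := by positivity
  have hθeq : (m : ℝ) * θ = (k : ℝ) * Real.pi := hk.symm
  have hkpos : 0 < k := by
    by_contra h
    push_neg at h
    have : (k : ℝ) * Real.pi ≤ 0 := mul_nonpos_of_nonpos_of_nonneg (by exact_mod_cast h) hpi.le
    nlinarith
  -- claim k = 1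
  have hk1 : k = 1 := by
    by_contra hne
    have hk2 : 2 ≤ k := by omega
    set K := k.toNat with hK
    have hKk : (K : ℝ) = (k : ℝ) := by
      rw [hK]; exact_mod_cast congrArg Int.cast (Int.toNat_of_nonneg hkpos.le)
    have hK2 : 2 ≤ K := by omega
    have hθeq' : (m : ℝ) * θ = (K : ℝ) * Real.pi := by rw [hKk]; exact hθeq
    set q := m / K with hq
    set j := q + 1 with hj
    clear_value q j
    have hjK : m < j * K := by
      have h1 := Nat.div_add_mod m K
      have h2 : m % K < K := Nat.mod_lt _ (by omega)
      calc m = K * q + m % K := by rw [hq]; exact h1.symm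
        _ < K * q + K := Nat.add_lt_add_left h2 _
        _ = j * K := by rw [hj]; ring
    have hjK2 : j * K ≤ m + K := by
      have h1 : q * K ≤ m := by rw [hq]; exact Nat.div_mul_le_self m K
      calc j * K = q * K + K := by rw [hj]; ring
        _ ≤ m + K := Nat.add_le_add_right h1 K
    have hjm : j ≤ m := by
      have h1 : q ≤ m / 2 := by rw [hq]; exact Nat.div_le_div_left hK2 (by omega)
      have h2 : m / 2 < m := Nat.div_lt_self (by omega) (by omega)
      omega
    -- j θ ∈ (π, π + θ], so sin (j θ) < 0
    have hmul : (j : ℝ) * θ * m = ((j * K : ℕ) : ℝ) * Real.pi := by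
      push_cast
      linear_combination (j : ℝ) * hθeq'
    have hcast1 : (m : ℝ) + 1 ≤ ((j * K : ℕ) : ℝ) := by exact_mod_cast hjK
    have hcast2 : ((j * K : ℕ) : ℝ) ≤ (m : ℝ) + (K : ℝ) := by exact_mod_cast hjK2
    have hlow : Real.pi < (j : ℝ) * θ := by nlinarith
    have hhigh : (j : ℝ) * θ < 2 * Real.pi := by nlinarith
    have hneg : Real.sin ((j : ℝ) * θ) < 0 := by
      have h1 : 0 < (j : ℝ) * θ - Real.pi := by linarith
      have h2 : (j : ℝ) * θ - Real.pi < Real.pi := by linarith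
      have h3 := Real.sin_pos_of_pos_of_lt_pi h1 h2
      rw [Real.sin_sub_pi] at h3
      linarith
    exact absurd (hsj j hjm) (not_le.mpr hneg)
  rw [hk1] at hθeq
  push_cast at hθeq
  field_simp
  linarith
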